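/- Suppose (Θ̂₁,…,Θ̂_T) is a tuple of positive definite p×p real matrices that minimizes the GFlsL objective G over all tuples of positive definite p×p real matrices. Then there exist p×p real matrices Ẽ₁,…,Ẽ_T such that: Ẽ₁ = 0; for each 2 ≤ t ≤ T, if Θ̂_t ≠ Θ̂_{t−1} then Ẽ_t = (Θ̂_t − Θ̂_{t−1})/‖Θ̂_t − Θ̂_{t−1}‖_F, and if Θ̂_t = Θ̂_{t−1} then ‖Ẽ_t‖_F ≤ 1; and for every 1 ≤ t ≤ T, (1/T)·∑_{r=t}^{T} (Θ̂_r − X_r X_rᵀ) + λ·Ẽ_t = 0 (the p×p zero matrix). -/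

import Mathlib

open Matrix Finset

/-- Frobenius norm of a real `p × p` matrix. -/
noncomputable def frob {p : ℕ} (A : Matrix (Fin p) (Fin p) ℝ) : ℝ :=
  Real.sqrt (∑ u, ∑ v, (A u v) ^ 2)

namespace Stmt0Aux
variable {p : ℕ}

def ip (A B : Matrix (Fin p) (Fin p) ℝ) : ℝ := ∑ u, ∑ v, A u v * B u v

lemma ip_comm (A B : Matrix (Fin p) (Fin p) ℝ) : ip A B = ip B A := by
  simp [ip, mul_comm]

lemma ip_add_left (A B C : Matrix (Fin p) (Fin p) ℝ) : ip (A + B) C = ip A C + ip B C := by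
  simp [ip, add_mul, Finset.sum_add_distrib]

lemma ip_add_right (A B C : Matrix (Fin p) (Fin p) ℝ) : ip A (B + C) = ip A B + ip A C := by
  simp [ip, mul_add, Finset.sum_add_distrib]

lemma ip_smul_left (c : ℝ) (A B : Matrix (Fin p) (Fin p) ℝ) : ip (c • A) B = c * ip A B := by
  simp [ip, Finset.mul_sum, mul_assoc]

lemma ip_smul_right (c : ℝ) (A B : Matrix (Fin p) (Fin p) ℝ) : ip A (c • B) = c * ip A B := by
  simp [ip, Finset.mul_sum, mul_left_comm]

lemma ip_sub_left (A B C : Matrix (Fin p) (Fin p) ℝ) : ip (A - B) C = ip A C - ip B C := by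
  simp [ip, sub_mul, Finset.sum_sub_distrib]

lemma ip_sum_left {s : Finset ℕ} (A : ℕ → Matrix (Fin p) (Fin p) ℝ)
    (B : Matrix (Fin p) (Fin p) ℝ) : ip (∑ r ∈ s, A r) B = ∑ r ∈ s, ip (A r) B := by
  classical
  induction s using Finset.induction_on with
  | empty => simp [ip]
  | insert _ _ h ih => rw [Finset.sum_insert h, ip_add_left, ih, Finset.sum_insert h]

lemma ip_self_nonneg (A : Matrix (Fin p) (Fin p) ℝ) : 0 ≤ ip A A :=
  Finset.sum_nonneg fun _ _ => Finset.sum_nonneg fun _ _ => mul_self_nonneg _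

lemma eq_zero_of_ip_self {A : Matrix (Fin p) (Fin p) ℝ} (h : ip A A = 0) : A = 0 := by
  ext u v
  have h1 := (Finset.sum_eq_zero_iff_of_nonneg
    (fun u _ => Finset.sum_nonneg fun v _ => mul_self_nonneg (A u v))).1 h u (by simp)
  have h2 := (Finset.sum_eq_zero_iff_of_nonneg
    (fun v _ => mul_self_nonneg (A u v))).1 h1 v (by simp)
  simpa [mul_self_eq_zero] using h2

lemma frob_eq (A : Matrix (Fin p) (Fin p) ℝ) : frob A = Real.sqrt (ip A A) := by
  simp [frob, ip, sq]

lemma frob_nonneg (A : Matrix (Fin p) (Fin p) ℝ) : 0 ≤ frob A := Real.sqrt_nonneg _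

lemma sq_frob (A : Matrix (Fin p) (Fin p) ℝ) : frob A ^ 2 = ip A A := by
  rw [frob_eq, Real.sq_sqrt (ip_self_nonneg A)]

lemma frob_smul (c : ℝ) (A : Matrix (Fin p) (Fin p) ℝ) : frob (c • A) = |c| * frob A := by
  rw [frob_eq, frob_eq, ip_smul_left, ip_smul_right, ← mul_assoc,
    Real.sqrt_mul (mul_self_nonneg c), Real.sqrt_mul_self_eq_abs]

lemma frob_zero : frob (0 : Matrix (Fin p) (Fin p) ℝ) = 0 := by simp [frob]

lemma frob_pos {A : Matrix (Fin p) (Fin p) ℝ} (hA : A ≠ 0) : 0 < frob A := by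
  rcases lt_or_eq_of_le (frob_nonneg A) with h | h
  · exact h
  · exfalso; apply hA
    apply eq_zero_of_ip_self
    have := sq_frob A
    rw [← h] at this; simpa using this.symm

lemma trace_transpose_mul (A B : Matrix (Fin p) (Fin p) ℝ) :
    (Aᵀ * B).trace = ip A B := by
  simp only [Matrix.trace, Matrix.diag, Matrix.mul_apply, Matrix.transpose_apply, ip]
  rw [Finset.sum_comm]

lemma ip_expand (A B : Matrix (Fin p) (Fin p) ℝ) (ε : ℝ) :
    ip (A + ε • B) (A + ε • B) = ip A A + 2 * ε * ip A B + ε ^ 2 * ip B B := by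
  simp only [ip_add_left, ip_add_right, ip_smul_left, ip_smul_right]
  rw [ip_comm B A]; ring

lemma trace_term_perturb (S A D : Matrix (Fin p) (Fin p) ℝ) (ε : ℝ) :
    ((A + ε • D)ᵀ * (A + ε • D) - Sᵀ * (A + ε • D) - (A + ε • D)ᵀ * S).trace
      = (Aᵀ * A - Sᵀ * A - Aᵀ * S).trace + (2 * ε * ip (A - S) D + ε ^ 2 * ip D D) := by
  rw [Matrix.trace_sub, Matrix.trace_sub, Matrix.trace_sub, Matrix.trace_sub,
    trace_transpose_mul, trace_transpose_mul, trace_transpose_mul, trace_transpose_mul,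
    trace_transpose_mul, trace_transpose_mul, ip_sub_left, ip_expand]
  have e2 : ip S (A + ε • D) = ip S A + ε * ip S D := by
    rw [ip_add_right, ip_smul_right]
  have e3 : ip (A + ε • D) S = ip A S + ε * ip D S := by
    rw [ip_add_left, ip_smul_left]
  rw [e2, e3, ip_comm D S]
  ring

/-- key scalar lemma -/
lemma scalar_main {b c K ε₀ : ℝ} (hε₀ : 0 < ε₀) (hc : 0 ≤ c) (hK : 0 ≤ K)
    (h : ∀ ε : ℝ, |ε| ≤ ε₀ → 0 ≤ ε * b + ε ^ 2 * c + |ε| * K) : |b| ≤ K := by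
  by_contra hcon
  push_neg at hcon
  set ε := min ε₀ ((|b| - K) / (c + 1)) with hε
  have hbK : 0 < |b| - K := by linarith
  have hεpos : 0 < ε := lt_min hε₀ (by positivity)
  have h1 := h ε (by rw [abs_of_pos hεpos]; exact min_le_left _ _)
  have h2 := h (-ε) (by rw [abs_neg, abs_of_pos hεpos]; exact min_le_left _ _)
  rw [abs_of_pos hεpos] at h1
  rw [abs_neg, abs_of_pos hεpos, neg_pow] at h2
  have h3 : ε * |b| ≤ ε ^ 2 * c + ε * K := by
    rcases abs_cases b with ⟨hb, _⟩ | ⟨hb, _⟩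
    · rw [hb]; nlinarith
    · rw [hb]; nlinarith
  have h4 : |b| ≤ ε * c + K := by
    exact (mul_le_mul_iff_right₀ hεpos).1 (by nlinarith : ε * |b| ≤ ε * (ε * c + K))
  have h5 : ε * c ≤ (|b| - K) / (c + 1) * c :=
    mul_le_mul_of_nonneg_right (min_le_right _ _) hc
  have h6 : (|b| - K) / (c + 1) * c < |b| - K := by
    rw [div_mul_eq_mul_div, div_lt_iff₀ (by linarith)]
    nlinarith
  linarith

lemma sqrt_ub {x h : ℝ} (hx : 0 < x) (hh : 0 ≤ x ^ 2 + h) :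
    Real.sqrt (x ^ 2 + h) ≤ x + h / (2 * x) := by
  have hr : 0 ≤ x + h / (2 * x) := by
    have heq : x + h / (2 * x) = (x ^ 2 + (x ^ 2 + h)) / (2 * x) := by field_simp; ring
    rw [heq]
    apply div_nonneg (by nlinarith) (by linarith)
  have key : Real.sqrt (x ^ 2 + h) ≤ Real.sqrt ((x + h / (2 * x)) ^ 2) := by
    apply Real.sqrt_le_sqrt
    have h2 : (x + h / (2 * x)) ^ 2 = x ^ 2 + h + (h / (2 * x)) ^ 2 := by
      field_simp; ring
    nlinarith [sq_nonneg (h / (2 * x))]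
  rwa [Real.sqrt_sq hr] at key

def qf (M : Matrix (Fin p) (Fin p) ℝ) (x : Fin p → ℝ) : ℝ := x ⬝ᵥ M *ᵥ x

lemma qf_continuous (M : Matrix (Fin p) (Fin p) ℝ) : Continuous (qf M) := by
  unfold qf dotProduct mulVec
  apply continuous_finset_sum
  intro u _
  exact (continuous_apply u).mul
    (continuous_finset_sum _ fun v _ => continuous_const.mul (continuous_apply v))

lemma qf_smul (M : Matrix (Fin p) (Fin p) ℝ) (a : ℝ) (x : Fin p → ℝ) :
    qf M (a • x) = a ^ 2 * qf M x := by
  simp only [qf, dotProduct, mulVec, Pi.smul_apply, smul_eq_mul]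
  rw [Finset.mul_sum]
  apply Finset.sum_congr rfl; intro u _
  rw [Finset.mul_sum, Finset.mul_sum, Finset.mul_sum]
  apply Finset.sum_congr rfl; intro v _
  ring

lemma sq_sum_pos {x : Fin p → ℝ} (hx : x ≠ 0) : 0 < ∑ i, x i ^ 2 := by
  have h : ∃ i, x i ≠ 0 := by
    by_contra hc; push_neg at hc; exact hx (funext hc)
  obtain ⟨i, hi⟩ := h
  exact Finset.sum_pos' (fun j _ => sq_nonneg _) ⟨i, by simp, by positivity⟩

lemma posdef_lb (hp : 1 ≤ p) {M : Matrix (Fin p) (Fin p) ℝ} (hM : M.PosDef) :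
    ∃ c > 0, ∀ x : Fin p → ℝ, c * (∑ i, x i ^ 2) ≤ qf M x := by
  classical
  set K : Set (Fin p → ℝ) := {x | ∑ i, x i ^ 2 = 1} with hK
  have hKc : IsCompact K := by
    have hclosed : IsClosed K :=
      isClosed_eq (continuous_finset_sum _ fun i _ => (continuous_apply i).pow 2)
        continuous_const
    have hbdd : Bornology.IsBounded K := by
      apply (Metric.isBounded_iff_subset_closedBall 0).2
      refine ⟨1, fun x hx => ?_⟩
      simp only [Metric.mem_closedBall, dist_zero_right]
      rw [pi_norm_le_iff_of_nonneg (by norm_num)]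
      intro i
      have h1 : x i ^ 2 ≤ 1 := by
        have h2 := Finset.single_le_sum (f := fun j => x j ^ 2) (fun j _ => sq_nonneg _)
          (Finset.mem_univ i)
        rw [hx] at h2
        exact h2
      rw [Real.norm_eq_abs, ← Real.sqrt_one, ← Real.sqrt_sq_eq_abs]
      exact Real.sqrt_le_sqrt h1
    exact Metric.isCompact_of_isClosed_isBounded hclosed hbdd
  have hne : K.Nonempty := by
    refine ⟨Pi.single ⟨0, hp⟩ 1, ?_⟩
    simp only [hK, Set.mem_setOf_eq, Pi.single_apply]
    rw [Finset.sum_eq_single ⟨0, hp⟩]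
    · simp
    · intro b _ hb; simp [hb]
    · simp
  obtain ⟨x₀, hx₀K, hmin'⟩ := hKc.exists_isMinOn hne (qf_continuous M).continuousOn
  have hmin : ∀ y ∈ K, qf M x₀ ≤ qf M y := fun y hy => hmin' hy
  have hx₀ne : x₀ ≠ 0 := by
    intro h
    rw [h] at hx₀K
    simp [hK] at hx₀K
  have hc : 0 < qf M x₀ := by
    have := hM.dotProduct_mulVec_pos hx₀ne
    simpa [qf, star_trivial] using this
  refine ⟨qf M x₀, hc, fun x => ?_⟩
  by_cases hx : x = 0
  · simp [hx, qf, dotProduct, mulVec]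
  · set a := Real.sqrt (∑ i, x i ^ 2) with ha
    have hapos : 0 < a := Real.sqrt_pos.2 (sq_sum_pos hx)
    have hy : (a⁻¹ • x) ∈ K := by
      simp only [hK, Set.mem_setOf_eq, Pi.smul_apply, smul_eq_mul, mul_pow]
      rw [← Finset.mul_sum]
      rw [inv_pow, ha, Real.sq_sqrt (sq_sum_pos hx).le]
      exact inv_mul_cancel₀ (sq_sum_pos hx).ne'
    have hmm := hmin _ hy
    rw [qf_smul] at hmm
    have ha2 : a ^ 2 = ∑ i, x i ^ 2 := Real.sq_sqrt (sq_sum_pos hx).le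
    have h2 : qf M x₀ * a ^ 2 ≤ qf M x := by
      calc qf M x₀ * a ^ 2 ≤ (a⁻¹ ^ 2 * qf M x) * a ^ 2 :=
            mul_le_mul_of_nonneg_right hmm (sq_nonneg a)
        _ = qf M x := by field_simp
    rwa [ha2] at h2

lemma qf_abs_le (D : Matrix (Fin p) (Fin p) ℝ) (x : Fin p → ℝ) :
    |qf D x| ≤ (∑ u, ∑ v, |D u v|) * ∑ i, x i ^ 2 := by
  simp only [qf, dotProduct, mulVec]
  calc |∑ u, x u * ∑ v, D u v * x v| ≤ ∑ u, |x u * ∑ v, D u v * x v| :=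
        Finset.abs_sum_le_sum_abs _ _
    _ ≤ ∑ u, ∑ v, |D u v| * (∑ i, x i ^ 2) := by
        apply Finset.sum_le_sum; intro u _
        rw [abs_mul]
        calc |x u| * |∑ v, D u v * x v| ≤ |x u| * ∑ v, |D u v * x v| := by
              apply mul_le_mul_of_nonneg_left (Finset.abs_sum_le_sum_abs _ _) (abs_nonneg _)
          _ = ∑ v, |x u| * (|D u v| * |x v|) := by
              rw [Finset.mul_sum]; congr 1; ext v; rw [abs_mul]
          _ ≤ ∑ v, |D u v| * (∑ i, x i ^ 2) := by
              apply Finset.sum_le_sum; intro v _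
              have h1 : x u ^ 2 ≤ ∑ i, x i ^ 2 :=
                Finset.single_le_sum (f := fun j => x j ^ 2) (fun j _ => sq_nonneg _)
                  (Finset.mem_univ u)
              have h2 : x v ^ 2 ≤ ∑ i, x i ^ 2 :=
                Finset.single_le_sum (f := fun j => x j ^ 2) (fun j _ => sq_nonneg _)
                  (Finset.mem_univ v)
              have h3 : |x u| * |x v| ≤ ∑ i, x i ^ 2 := by
                nlinarith [sq_abs (x u), sq_abs (x v), sq_nonneg (|x u| - |x v|),
                  abs_nonneg (x u), abs_nonneg (x v)]
              calc |x u| * (|D u v| * |x v|) = |D u v| * (|x u| * |x v|) := by ring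
                _ ≤ |D u v| * ∑ i, x i ^ 2 :=
                    mul_le_mul_of_nonneg_left h3 (abs_nonneg _)
    _ = (∑ u, ∑ v, |D u v|) * ∑ i, x i ^ 2 := by
        rw [Finset.sum_mul]
        apply Finset.sum_congr rfl; intro u _
        rw [Finset.sum_mul]

lemma posdef_transpose {M : Matrix (Fin p) (Fin p) ℝ} (hM : M.PosDef) : Mᵀ = M := by
  have := hM.1
  rwa [Matrix.IsHermitian, Matrix.conjTranspose_eq_transpose_of_trivial] at this

lemma posdef_perturb (hp : 1 ≤ p) {M : Matrix (Fin p) (Fin p) ℝ} (hM : M.PosDef)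
    (D : Matrix (Fin p) (Fin p) ℝ) (hD : Dᵀ = D) :
    ∃ δ > 0, ∀ ε : ℝ, |ε| ≤ δ → (M + ε • D).PosDef := by
  obtain ⟨c, hc, hlb⟩ := posdef_lb hp hM
  set K0 : ℝ := ∑ u, ∑ v, |D u v| with hK0
  have hK0nn : 0 ≤ K0 := Finset.sum_nonneg fun _ _ => Finset.sum_nonneg fun _ _ => abs_nonneg _
  refine ⟨c / (2 * (K0 + 1)), by positivity, fun ε hε => ?_⟩
  refine Matrix.PosDef.of_dotProduct_mulVec_pos ?_ ?_
  · have h1 : Mᵀ = M := posdef_transpose hM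
    show (M + ε • D)ᴴ = M + ε • D
    have h2 : (M + ε • D)ᴴ = (M + ε • D)ᵀ := by
      ext i j; simp [Matrix.conjTranspose_apply, Matrix.transpose_apply]
    rw [h2, Matrix.transpose_add, Matrix.transpose_smul, h1, hD]
  · intro x hx
    have hqf : dotProduct (star x) ((M + ε • D) *ᵥ x) = qf M x + ε * qf D x := by
      simp only [star_trivial, Matrix.add_mulVec, Matrix.smul_mulVec, dotProduct_add,
        dotProduct_smul, smul_eq_mul, qf]
    rw [hqf]
    have h1 : c * (∑ i, x i ^ 2) ≤ qf M x := hlb x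
    have h2 : |ε * qf D x| ≤ (c / (2 * (K0 + 1))) * (K0 * ∑ i, x i ^ 2) := by
      rw [abs_mul]
      apply mul_le_mul hε (qf_abs_le D x) (abs_nonneg _) (by positivity)
    have h3 : (c / (2 * (K0 + 1))) * K0 ≤ c / 2 := by
      rw [div_mul_eq_mul_div, div_le_div_iff₀ (by positivity) (by norm_num)]
      nlinarith
    have hsum : 0 < ∑ i, x i ^ 2 := sq_sum_pos hx
    have h4 : |ε * qf D x| ≤ (c / 2) * ∑ i, x i ^ 2 := by
      calc |ε * qf D x| ≤ (c / (2 * (K0 + 1))) * K0 * ∑ i, x i ^ 2 := by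
            rw [mul_assoc]; exact h2
        _ ≤ (c / 2) * ∑ i, x i ^ 2 := mul_le_mul_of_nonneg_right h3 hsum.le
    have h5 := abs_le.1 h4
    nlinarith

lemma exists_uniform_delta (s : Finset ℕ) (P : ℕ → ℝ → Prop)
    (h : ∀ r ∈ s, ∃ δ > 0, ∀ ε : ℝ, |ε| ≤ δ → P r ε) :
    ∃ δ > 0, ∀ ε : ℝ, |ε| ≤ δ → ∀ r ∈ s, P r ε := by
  classical
  induction s using Finset.induction_on with
  | empty => exact ⟨1, one_pos, by simp⟩
  | @insert a s ha ih =>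
    obtain ⟨δ1, hδ1, h1⟩ := h a (Finset.mem_insert_self a s)
    obtain ⟨δ2, hδ2, h2⟩ := ih fun r hr => h r (Finset.mem_insert_of_mem hr)
    refine ⟨min δ1 δ2, lt_min hδ1 hδ2, fun ε hε r hr => ?_⟩
    rcases Finset.mem_insert.1 hr with rfl | hr
    · exact h1 ε (le_trans hε (min_le_left _ _))
    · exact h2 ε (le_trans hε (min_le_right _ _)) r hr

end Stmt0Aux
/-- The Group Fused least-squares LASSO (GFlsL) objective, with time indices `t = 1, …, T`. -/
noncomputable def gflsl (p T : ℕ) (X : ℕ → Fin p → ℝ) (lam : ℝ)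
    (Θ : ℕ → Matrix (Fin p) (Fin p) ℝ) : ℝ :=
  (1 / (2 * (T : ℝ))) *
      ∑ t ∈ Finset.Icc 1 T,
        ((Θ t)ᵀ * Θ t - (Matrix.vecMulVec (X t) (X t))ᵀ * Θ t
          - (Θ t)ᵀ * Matrix.vecMulVec (X t) (X t)).trace
    + lam * ∑ t ∈ Finset.Icc 2 T, frob (Θ t - Θ (t - 1))

open Stmt0Aux in
/-- any minimizer of the GFlsL objective over positive definite tuples
satisfies the stated subgradient (KKT) conditions. -/
theorem stmt0 (p T : ℕ) (hp : 1 ≤ p) (hT : 1 ≤ T)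
    (X : ℕ → Fin p → ℝ) (lam : ℝ) (hlam : 0 < lam)
    (Θhat : ℕ → Matrix (Fin p) (Fin p) ℝ)
    (hPD : ∀ t ∈ Finset.Icc 1 T, (Θhat t).PosDef)
    (hmin : ∀ Θ : ℕ → Matrix (Fin p) (Fin p) ℝ,
      (∀ t ∈ Finset.Icc 1 T, (Θ t).PosDef) →
      gflsl p T X lam Θhat ≤ gflsl p T X lam Θ) :
    ∃ E : ℕ → Matrix (Fin p) (Fin p) ℝ,
      E 1 = 0 ∧
      (∀ t ∈ Finset.Icc 2 T,
        (Θhat t ≠ Θhat (t - 1) →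
          E t = (frob (Θhat t - Θhat (t - 1)))⁻¹ • (Θhat t - Θhat (t - 1))) ∧
        (Θhat t = Θhat (t - 1) → frob (E t) ≤ 1)) ∧
      (∀ t ∈ Finset.Icc 1 T,
        (1 / (T : ℝ)) • (∑ r ∈ Finset.Icc t T,
            (Θhat r - Matrix.vecMulVec (X r) (X r))) + lam • E t = 0) := by
  classical
  have hT0 : (0:ℝ) < T := by exact_mod_cast hT
  set M : ℕ → Matrix (Fin p) (Fin p) ℝ :=
    fun t => (T:ℝ)⁻¹ • ∑ r ∈ Finset.Icc t T, (Θhat r - Matrix.vecMulVec (X r) (X r)) with hMdef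
  set E : ℕ → Matrix (Fin p) (Fin p) ℝ := fun t => (-lam⁻¹) • M t with hEdef
  have hΘsym : ∀ r ∈ Finset.Icc 1 T, (Θhat r)ᵀ = Θhat r :=
    fun r hr => posdef_transpose (hPD r hr)
  have hSsym : ∀ r : ℕ, (Matrix.vecMulVec (X r) (X r))ᵀ = Matrix.vecMulVec (X r) (X r) := by
    intro r; ext u v; simp [Matrix.vecMulVec_apply, mul_comm]
  have hMsym : ∀ t, 1 ≤ t → (M t)ᵀ = M t := by
    intro t ht1
    simp only [hMdef]
    rw [Matrix.transpose_smul, Matrix.transpose_sum]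
    congr 1
    apply Finset.sum_congr rfl
    intro r hr
    obtain ⟨hr1, hr2⟩ := Finset.mem_Icc.1 hr
    rw [Matrix.transpose_sub, hSsym, hΘsym r (Finset.mem_Icc.2 ⟨le_trans ht1 hr1, hr2⟩)]
  -- the master inequality
  have key : ∀ t, t ∈ Finset.Icc 1 T → ∀ D : Matrix (Fin p) (Fin p) ℝ, Dᵀ = D →
      ∃ ε₀ > 0, ∀ ε : ℝ, |ε| ≤ ε₀ →
        0 ≤ ε * ip (M t) D
            + ε ^ 2 * (((Finset.Icc t T).card : ℝ) * ip D D / (2 * T))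
            + lam * (if t ∈ Finset.Icc 2 T then
                frob (Θhat t - Θhat (t - 1) + ε • D) - frob (Θhat t - Θhat (t - 1)) else 0) := by
    intro t ht D hD
    obtain ⟨ht1, htT⟩ := Finset.mem_Icc.1 ht
    have hsub : Finset.Icc t T ⊆ Finset.Icc 1 T := Finset.Icc_subset_Icc_left ht1
    obtain ⟨ε₀, hε₀, hpert⟩ := exists_uniform_delta (Finset.Icc t T)
      (fun r ε => (Θhat r + ε • D).PosDef)
      (fun r hr => posdef_perturb hp (hPD r (hsub hr)) D hD)
    refine ⟨ε₀, hε₀, fun ε hε => ?_⟩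
    set Θ' : ℕ → Matrix (Fin p) (Fin p) ℝ :=
      fun r => if r ∈ Finset.Icc t T then Θhat r + ε • D else Θhat r with hΘ'
    have hPD' : ∀ r ∈ Finset.Icc 1 T, (Θ' r).PosDef := by
      intro r hr
      by_cases h : r ∈ Finset.Icc t T
      · show (if r ∈ Finset.Icc t T then Θhat r + ε • D else Θhat r).PosDef
        rw [if_pos h]; exact hpert ε hε r h
      · show (if r ∈ Finset.Icc t T then Θhat r + ε • D else Θhat r).PosDef
        rw [if_neg h]; exact hPD r hr
    have htm : t ∈ Finset.Icc t T := Finset.mem_Icc.2 ⟨le_refl t, htT⟩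
    have hq : ∀ r ∈ Finset.Icc 1 T,
        ((Θ' r)ᵀ * Θ' r - (Matrix.vecMulVec (X r) (X r))ᵀ * Θ' r
            - (Θ' r)ᵀ * Matrix.vecMulVec (X r) (X r)).trace
          = ((Θhat r)ᵀ * Θhat r - (Matrix.vecMulVec (X r) (X r))ᵀ * Θhat r
            - (Θhat r)ᵀ * Matrix.vecMulVec (X r) (X r)).trace
            + (if r ∈ Finset.Icc t T then
                2 * ε * ip (Θhat r - Matrix.vecMulVec (X r) (X r)) D + ε ^ 2 * ip D D
              else 0) := by
      intro r hr
      by_cases h : r ∈ Finset.Icc t T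
      · simp only [hΘ', if_pos h]
        rw [trace_term_perturb]
      · simp only [hΘ', if_neg h, add_zero]
    have htv : ∀ r ∈ Finset.Icc 2 T,
        frob (Θ' r - Θ' (r - 1))
          = frob (Θhat r - Θhat (r - 1))
            + (if r = t then
                frob (Θhat t - Θhat (t - 1) + ε • D) - frob (Θhat t - Θhat (t - 1)) else 0) := by
      intro r hr
      obtain ⟨hr2, hrT⟩ := Finset.mem_Icc.1 hr
      by_cases hrt : r = t
      · subst hrt
        have h1 : r - 1 ∉ Finset.Icc r T := by
          simp only [Finset.mem_Icc]; omega
        rw [if_pos rfl]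
        simp only [hΘ', if_pos htm, if_neg h1]
        have harr : Θhat r + ε • D - Θhat (r - 1) = Θhat r - Θhat (r - 1) + ε • D := by abel
        rw [harr]; ring
      · rw [if_neg hrt, add_zero]
        by_cases hlt : r < t
        · have h1 : r ∉ Finset.Icc t T := by simp only [Finset.mem_Icc]; omega
          have h2 : r - 1 ∉ Finset.Icc t T := by simp only [Finset.mem_Icc]; omega
          simp only [hΘ', if_neg h1, if_neg h2]
        · have h1 : r ∈ Finset.Icc t T := by simp only [Finset.mem_Icc]; omega
          have h2 : r - 1 ∈ Finset.Icc t T := by simp only [Finset.mem_Icc]; omega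
          simp only [hΘ', if_pos h1, if_pos h2]
          congr 1
          abel
    have h0 := hmin Θ' hPD'
    simp only [gflsl] at h0
    rw [Finset.sum_congr rfl hq, Finset.sum_congr rfl htv, Finset.sum_add_distrib,
      Finset.sum_add_distrib, Finset.sum_ite_mem,
      Finset.inter_eq_right.2 hsub] at h0
    have hsum_ite : ∑ r ∈ Finset.Icc 2 T,
        (if r = t then
          frob (Θhat t - Θhat (t - 1) + ε • D) - frob (Θhat t - Θhat (t - 1)) else 0)
        = (if t ∈ Finset.Icc 2 T then
          frob (Θhat t - Θhat (t - 1) + ε • D) - frob (Θhat t - Θhat (t - 1)) else 0) :=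
      Finset.sum_ite_eq' (Finset.Icc 2 T) t _
    rw [hsum_ite] at h0
    have hipM : ip (M t) D
        = (T:ℝ)⁻¹ * ∑ r ∈ Finset.Icc t T,
            ip (Θhat r - Matrix.vecMulVec (X r) (X r)) D := by
      simp only [hMdef]
      rw [ip_smul_left, ip_sum_left]
    have hQ : ∑ r ∈ Finset.Icc t T,
        (2 * ε * ip (Θhat r - Matrix.vecMulVec (X r) (X r)) D + ε ^ 2 * ip D D)
        = 2 * ε * (∑ r ∈ Finset.Icc t T, ip (Θhat r - Matrix.vecMulVec (X r) (X r)) D)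
          + ((Finset.Icc t T).card : ℝ) * (ε ^ 2 * ip D D) := by
      rw [Finset.sum_add_distrib, ← Finset.mul_sum, Finset.sum_const, nsmul_eq_mul]
    rw [hQ] at h0
    rw [hipM]
    have hid : ε * ((T:ℝ)⁻¹ * ∑ r ∈ Finset.Icc t T,
          ip (Θhat r - Matrix.vecMulVec (X r) (X r)) D)
        + ε ^ 2 * (((Finset.Icc t T).card : ℝ) * ip D D / (2 * T))
        = 1 / (2 * (T:ℝ)) *
          (2 * ε * (∑ r ∈ Finset.Icc t T, ip (Θhat r - Matrix.vecMulVec (X r) (X r)) D)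
            + ((Finset.Icc t T).card : ℝ) * (ε ^ 2 * ip D D)) := by
      field_simp
    rw [hid]
    nlinarith [h0]
  -- card/ip positivity helper
  have hCnn : ∀ t (D : Matrix (Fin p) (Fin p) ℝ),
      0 ≤ ((Finset.Icc t T).card : ℝ) * ip D D / (2 * T) := by
    intro t D
    apply div_nonneg (mul_nonneg (Nat.cast_nonneg _) (ip_self_nonneg _)) (by positivity)
  refine ⟨E, ?_, ?_, ?_⟩
  · -- E 1 = 0
    have h1 : (1:ℕ) ∈ Finset.Icc 1 T := Finset.mem_Icc.2 ⟨le_refl 1, hT⟩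
    obtain ⟨ε₀, hε₀, hk⟩ := key 1 h1 (M 1) (hMsym 1 le_rfl)
    have hnot : (1:ℕ) ∉ Finset.Icc 2 T := by simp
    have hb : |ip (M 1) (M 1)| ≤ 0 := by
      apply scalar_main hε₀ (hCnn 1 (M 1)) le_rfl
      intro ε hε
      have hh := hk ε hε
      rw [if_neg hnot] at hh
      nlinarith [hh]
    have : ip (M 1) (M 1) = 0 := by
      have := abs_nonneg (ip (M 1) (M 1)); linarith [abs_nonneg (ip (M 1) (M 1)), hb,
        le_abs_self (ip (M 1) (M 1)), neg_abs_le (ip (M 1) (M 1))]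
    have hM1 : M 1 = 0 := eq_zero_of_ip_self this
    simp only [hEdef, hM1, smul_zero]
  · -- subgradient conditions
    intro t ht
    obtain ⟨ht2, htT⟩ := Finset.mem_Icc.1 ht
    have ht1 : t ∈ Finset.Icc 1 T := Finset.mem_Icc.2 ⟨by omega, htT⟩
    have htm1 : t - 1 ∈ Finset.Icc 1 T := Finset.mem_Icc.2 ⟨by omega, by omega⟩
    have hΔsym : (Θhat t - Θhat (t - 1))ᵀ = Θhat t - Θhat (t - 1) := by
      rw [Matrix.transpose_sub, hΘsym t ht1, hΘsym _ htm1]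
    constructor
    · intro hne
      have hΔne : Θhat t - Θhat (t - 1) ≠ 0 := sub_ne_zero.2 hne
      set Δ := Θhat t - Θhat (t - 1) with hΔ
      have hx : 0 < frob Δ := frob_pos hΔne
      have hz : ∀ D : Matrix (Fin p) (Fin p) ℝ, Dᵀ = D →
          ip (M t + (lam / frob Δ) • Δ) D = 0 := by
        intro D hD
        obtain ⟨ε₀, hε₀, hk⟩ := key t ht1 D hD
        have hc' : 0 ≤ ((Finset.Icc t T).card : ℝ) * ip D D / (2 * T)
            + lam * (ip D D / (2 * frob Δ)) := by
          have := hCnn t D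
          have h2 : 0 ≤ ip D D / (2 * frob Δ) :=
            div_nonneg (ip_self_nonneg D) (by positivity)
          nlinarith
        have hb : |ip (M t) D + lam * (ip Δ D / frob Δ)| ≤ 0 := by
          apply scalar_main hε₀ hc' le_rfl
          intro ε hε
          have hh := hk ε hε
          rw [if_pos ht] at hh
          -- bound the TV term
          have hfe : frob (Δ + ε • D)
              = Real.sqrt ((frob Δ) ^ 2 + (2 * ε * ip Δ D + ε ^ 2 * ip D D)) := by
            rw [frob_eq, ip_expand, sq_frob, add_assoc]
          have hh0 : 0 ≤ (frob Δ) ^ 2 + (2 * ε * ip Δ D + ε ^ 2 * ip D D) := by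
            rw [sq_frob, ← add_assoc, ← ip_expand]
            exact ip_self_nonneg _
          have hub : frob (Δ + ε • D) ≤ frob Δ
              + (2 * ε * ip Δ D + ε ^ 2 * ip D D) / (2 * frob Δ) := by
            rw [hfe]
            exact sqrt_ub hx hh0
          have hub2 : lam * (frob (Δ + ε • D) - frob Δ)
              ≤ lam * ((2 * ε * ip Δ D + ε ^ 2 * ip D D) / (2 * frob Δ)) := by
            apply mul_le_mul_of_nonneg_left _ hlam.le
            linarith
          have hdiv : (2 * ε * ip Δ D + ε ^ 2 * ip D D) / (2 * frob Δ)
              = ε * (ip Δ D / frob Δ) + ε ^ 2 * (ip D D / (2 * frob Δ)) := by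
            field_simp
          rw [hdiv] at hub2
          nlinarith [hh, hub2]
        have hb0 : ip (M t) D + lam * (ip Δ D / frob Δ) = 0 := by
          have h1 := le_abs_self (ip (M t) D + lam * (ip Δ D / frob Δ))
          have h2 := neg_abs_le (ip (M t) D + lam * (ip Δ D / frob Δ))
          linarith
        rw [ip_add_left, ip_smul_left (lam / frob Δ) Δ D]
        calc ip (M t) D + lam / frob Δ * ip Δ D
            = ip (M t) D + lam * (ip Δ D / frob Δ) := by ring
          _ = 0 := hb0
      have hDsym : (M t + (lam / frob Δ) • Δ)ᵀ = M t + (lam / frob Δ) • Δ := by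
        rw [Matrix.transpose_add, hMsym t (by omega), Matrix.transpose_smul, hΔsym]
      have hz0 : M t + (lam / frob Δ) • Δ = 0 :=
        eq_zero_of_ip_self (hz _ hDsym)
      have hMt : M t = -((lam / frob Δ) • Δ) := by
        rw [← sub_eq_zero]; rw [sub_neg_eq_add]; exact hz0
      simp only [hEdef, hMt, smul_neg, smul_smul]
      rw [← neg_smul]
      congr 1
      field_simp
    · intro heq
      have hΔ0 : Θhat t - Θhat (t - 1) = 0 := sub_eq_zero.2 heq
      have hle : frob (M t) ≤ lam := by
        by_cases h0 : M t = 0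
        · rw [h0, frob_zero]; exact hlam.le
        · obtain ⟨ε₀, hε₀, hk⟩ := key t ht1 (M t) (hMsym t (by omega))
          have hKnn : 0 ≤ lam * frob (M t) := mul_nonneg hlam.le (frob_nonneg _)
          have hb : |ip (M t) (M t)| ≤ lam * frob (M t) := by
            apply scalar_main hε₀ (hCnn t (M t)) hKnn
            intro ε hε
            have hh := hk ε hε
            rw [if_pos ht, hΔ0] at hh
            rw [zero_add, frob_zero, frob_smul] at hh
            nlinarith [hh]
          have hb2 : ip (M t) (M t) ≤ lam * frob (M t) :=
            le_trans (le_abs_self _) hb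
          rw [← sq_frob] at hb2
          have hfp : 0 < frob (M t) := frob_pos h0
          nlinarith
      have hfE : frob (E t) = lam⁻¹ * frob (M t) := by
        simp only [hEdef]
        rw [frob_smul, abs_neg, abs_inv, abs_of_pos hlam]
      rw [hfE]
      calc lam⁻¹ * frob (M t) ≤ lam⁻¹ * lam := by
            apply mul_le_mul_of_nonneg_left hle (by positivity)
        _ = 1 := inv_mul_cancel₀ hlam.ne'
  · -- stationarity
    intro t ht
    have h1 : lam • E t = -(M t) := by
      simp only [hEdef]
      rw [smul_smul, mul_neg, mul_inv_cancel₀ hlam.ne', neg_smul, one_smul]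
    rw [h1]
    simp only [hMdef, one_div]
    exact add_neg_cancel _
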